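/- Fix a finite set 𝒮 ⊆ ℕ ∪ {0} and an integer N ≥ 4·max(𝒮) + 1. Then for every n ≥ 1 the reduction map Mod_N, sending f : V(Q_n) → ℤ to the function v ↦ (f(v) mod N) ∈ ℤ_N, is a bijection from Lip(Q_n; 𝒮) onto Hom_𝟎(Q_n, C(N; 𝒮)), the set of graph homomorphisms g from Q_n to the Cayley graph C(N; 𝒮) with g(𝟎) = 0. -/
import Mathlib

open Finset Classical

noncomputable section

/-- The discrete torus `ℤ_m^n`. -/
def torus (m n : ℕ) : SimpleGraph (Fin n → ZMod m) :=
  SimpleGraph.fromRel (fun x y => ∃ i, x i = y i + 1 ∧ ∀ j, j ≠ i → x j = y j)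

/-- The `n`-dimensional hypercube `Q_n`. -/
def cube (n : ℕ) : SimpleGraph (Fin n → ZMod 2) := torus 2 n

/-- Adjacency in the Cayley graph `C(N; 𝒮)` on `ℤ_N`: `u ~ v` iff `u - v ≡ ±x (mod N)`
for some `x ∈ 𝒮` (loops allowed when `0 ∈ 𝒮`). -/
def CayAdj (N : ℕ) (S : Finset ℕ) (u v : ZMod N) : Prop :=
  ∃ x ∈ S, u - v = (x : ZMod N) ∨ v - u = (x : ZMod N)

/-- `f ∈ Lip(Q_n; 𝒮)`: `f(𝟎) = 0` and `|f(u) - f(v)| ∈ 𝒮` across every edge of `Q_n`. -/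
def IsLip (n : ℕ) (S : Finset ℕ) (f : (Fin n → ZMod 2) → ℤ) : Prop :=
  f 0 = 0 ∧ ∀ u v, (cube n).Adj u v → (f u - f v).natAbs ∈ S

/-- `g ∈ Hom_𝟎(Q_n, C(N; 𝒮))`: a graph homomorphism from `Q_n` to the Cayley graph
`C(N; 𝒮)` sending `𝟎` to `0`. -/
def IsHomZero (n N : ℕ) (S : Finset ℕ) (g : (Fin n → ZMod 2) → ZMod N) : Prop :=
  g 0 = 0 ∧ ∀ u v, (cube n).Adj u v → CayAdj N S (g u) (g v)

namespace LipAux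

lemma int_eq_of_cast_eq {N : ℕ} {a b : ℤ} (h : ((a : ℤ) : ZMod N) = (b : ℤ))
    (hb : (a - b).natAbs < N) : a = b := by
  have h0 : ((a - b : ℤ) : ZMod N) = 0 := by push_cast; rw [h]; ring
  have hd : (N : ℤ) ∣ a - b := by
    rwa [ZMod.intCast_zmod_eq_zero_iff_dvd] at h0
  by_contra hne
  have h1 : a - b ≠ 0 := by omega
  have h2 : (N : ℤ) ≤ |a - b| := Int.le_of_dvd (abs_pos.mpr h1) ((dvd_abs _ _).mpr hd)
  rw [Int.abs_eq_natAbs] at h2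
  omega

lemma cube_adj {n : ℕ} {u v : Fin n → ZMod 2} (h : (cube n).Adj u v) :
    ∃ i, u i = v i + 1 ∧ ∀ j, j ≠ i → u j = v j := by
  rw [cube, torus, SimpleGraph.fromRel_adj] at h
  have flip : ∀ a b : ZMod 2, a = b + 1 → b = a + 1 := by decide
  obtain ⟨-, h | h⟩ := h
  · exact h
  · obtain ⟨i, hi, hj⟩ := h
    exact ⟨i, flip _ _ hi, fun j hji => (hj j hji).symm⟩

def stp (n : ℕ) (u v : Fin n → ZMod 2) : Prop := u = v ∨ (cube n).Adj u v

def pth (n : ℕ) (v : Fin n → ZMod 2) (k : ℕ) : Fin n → ZMod 2 :=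
  fun j => if (j : ℕ) < k then v j else 0

lemma pth_zero (n : ℕ) (v : Fin n → ZMod 2) : pth n v 0 = 0 := by
  funext j; simp [pth]

lemma pth_ge (n : ℕ) (v : Fin n → ZMod 2) {k : ℕ} (hk : n ≤ k) : pth n v k = v := by
  funext j; simp [pth, lt_of_lt_of_le j.isLt hk]

lemma pth_step (n : ℕ) (v : Fin n → ZMod 2) {k : ℕ} (hk : k < n) :
    stp n (pth n v (k+1)) (pth n v k) := by
  by_cases hv : v ⟨k, hk⟩ = 0
  · left; funext j
    simp only [pth]
    by_cases h1 : (j : ℕ) < k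
    · rw [if_pos (by omega), if_pos h1]
    · by_cases h2 : (j : ℕ) < k + 1
      · have : j = ⟨k, hk⟩ := Fin.ext (show (j:ℕ) = k by omega)
        rw [if_pos h2, if_neg h1, this, hv]
      · rw [if_neg h2, if_neg h1]
  · right
    rw [cube, torus, SimpleGraph.fromRel_adj]
    have hone : v ⟨k, hk⟩ = 0 + 1 := by
      revert hv; generalize v ⟨k, hk⟩ = a; revert a; decide
    constructor
    · intro he
      have := congrFun he ⟨k, hk⟩
      simp only [pth] at this
      rw [if_pos (Nat.lt_succ_self k), if_neg (lt_irrefl k)] at this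
      exact hv this
    · left
      refine ⟨⟨k, hk⟩, ?_, fun j hj => ?_⟩
      · simp only [pth]
        rw [if_pos (Nat.lt_succ_self k), if_neg (lt_irrefl k)]
        exact hone
      · have hjk : (j : ℕ) ≠ k := fun hjk => hj (Fin.ext hjk)
        simp only [pth]
        by_cases h1 : (j : ℕ) < k
        · rw [if_pos (by omega), if_pos h1]
        · rw [if_neg (by omega), if_neg h1]

def br (N : ℕ) (c : ZMod N) : ℤ := if 2 * c.val ≤ N then (c.val : ℤ) else (c.val : ℤ) - N

lemma br_cast {N : ℕ} (hN0 : N ≠ 0) (c : ZMod N) : ((br N c : ℤ) : ZMod N) = c := by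
  haveI : NeZero N := ⟨hN0⟩
  unfold br; split
  · simp [ZMod.natCast_val]
  · push_cast
    simp [ZMod.natCast_val, ZMod.natCast_self]

lemma br_zero (N : ℕ) : br N 0 = 0 := by
  simp [br, ZMod.val_zero]

lemma br_natCast {N M x : ℕ} (hN : 4 * M + 1 ≤ N) (hx : x ≤ M) :
    br N ((x : ℕ) : ZMod N) = (x : ℤ) := by
  haveI : NeZero N := ⟨by omega⟩
  have hv : (((x : ℕ) : ZMod N)).val = x := ZMod.val_cast_of_lt (by omega)
  simp only [br, hv]
  rw [if_pos (by omega)]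

lemma br_neg_natCast {N M x : ℕ} (hN : 4 * M + 1 ≤ N) (hx : x ≤ M) :
    br N (-((x : ℕ) : ZMod N)) = -(x : ℤ) := by
  haveI : NeZero N := ⟨by omega⟩
  rcases Nat.eq_zero_or_pos x with h0 | h0
  · subst h0; simpa using br_zero N
  · have hcast : -((x : ℕ) : ZMod N) = ((N - x : ℕ) : ZMod N) := by
      have : ((N - x : ℕ) : ZMod N) = ((N : ℕ) : ZMod N) - ((x : ℕ) : ZMod N) := by
        rw [Nat.cast_sub (by omega)]
      rw [this, ZMod.natCast_self, zero_sub]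
    have hv : (((N - x : ℕ) : ZMod N)).val = N - x := ZMod.val_cast_of_lt (by omega)
    rw [hcast]
    simp only [br, hv]
    rw [if_neg (by omega)]
    push_cast [Nat.cast_sub (by omega : x ≤ N)]
    ring

section Hom

variable {S : Finset ℕ} {N n : ℕ} {g : (Fin n → ZMod 2) → ZMod N}

/-- The integer lift of the difference `g u - g v`. -/
def dd (N n : ℕ) (g : (Fin n → ZMod 2) → ZMod N) (u v : Fin n → ZMod 2) : ℤ :=
  br N (g u - g v)

lemma dd_cast (hN0 : N ≠ 0) (u v : Fin n → ZMod 2) :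
    ((dd N n g u v : ℤ) : ZMod N) = g u - g v := br_cast hN0 _

lemma dd_self (u : Fin n → ZMod 2) : dd N n g u u = 0 := by
  simp [dd, br_zero]

lemma dd_adj (hN : 4 * S.sup id + 1 ≤ N) (hg : IsHomZero n N S g)
    {u v : Fin n → ZMod 2} (h : (cube n).Adj u v) :
    (dd N n g u v).natAbs ∈ S ∧ (dd N n g u v).natAbs ≤ S.sup id := by
  obtain ⟨x, hxS, hc⟩ := hg.2 u v h
  have hx : x ≤ S.sup id := Finset.le_sup (f := id) hxS
  rcases hc with hc | hc
  · have : dd N n g u v = (x : ℤ) := by rw [dd, hc, br_natCast hN hx]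
    rw [this]; simpa using ⟨hxS, hx⟩
  · have hc' : g u - g v = -((x : ℕ) : ZMod N) := by rw [← hc]; ring
    have : dd N n g u v = -(x : ℤ) := by rw [dd, hc', br_neg_natCast hN hx]
    rw [this]; simpa using ⟨hxS, hx⟩

lemma dd_stp (hN : 4 * S.sup id + 1 ≤ N) (hg : IsHomZero n N S g)
    {u v : Fin n → ZMod 2} (h : stp n u v) :
    (dd N n g u v).natAbs ≤ S.sup id := by
  rcases h with rfl | h
  · simp [dd_self]
  · exact (dd_adj hN hg h).2

lemma dd_square (hN : 4 * S.sup id + 1 ≤ N) (hg : IsHomZero n N S g)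
    {w x y z : Fin n → ZMod 2} (h1 : stp n w x) (h2 : stp n x z)
    (h3 : stp n w y) (h4 : stp n y z) :
    dd N n g w x + dd N n g x z = dd N n g w y + dd N n g y z := by
  have hN0 : N ≠ 0 := by omega
  refine int_eq_of_cast_eq (N := N) ?_ ?_
  · push_cast [dd_cast hN0]
    ring
  · have b1 := dd_stp hN hg h1
    have b2 := dd_stp hN hg h2
    have b3 := dd_stp hN hg h3
    have b4 := dd_stp hN hg h4
    omega

/-- The lift of `g` along canonical paths. -/
def FF (N n : ℕ) (g : (Fin n → ZMod 2) → ZMod N) (v : Fin n → ZMod 2) : ℤ :=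
  ∑ k ∈ Finset.range n, dd N n g (pth n v (k+1)) (pth n v k)

lemma FF_cast (hN0 : N ≠ 0) (hg0 : g 0 = 0) (v : Fin n → ZMod 2) :
    ((FF N n g v : ℤ) : ZMod N) = g v := by
  have : ((FF N n g v : ℤ) : ZMod N)
      = ∑ k ∈ Finset.range n, (g (pth n v (k+1)) - g (pth n v k)) := by
    rw [FF]
    push_cast
    exact Finset.sum_congr rfl fun k _ => dd_cast hN0 _ _
  rw [this, Finset.sum_range_sub (fun k => g (pth n v k)), pth_ge n v le_rfl, pth_zero, hg0,
    sub_zero]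

lemma FF_zero : FF N n g 0 = 0 := by
  have hp : ∀ k, pth n (0 : Fin n → ZMod 2) k = 0 := by
    intro k; funext j; simp [pth]
  rw [FF]
  refine Finset.sum_eq_zero fun k _ => ?_
  rw [hp, hp, dd_self]

lemma FF_edge (hN : 4 * S.sup id + 1 ≤ N) (hg : IsHomZero n N S g)
    {u v : Fin n → ZMod 2} (h : (cube n).Adj u v) :
    FF N n g u - FF N n g v = dd N n g u v := by
  obtain ⟨i, hi, hij⟩ := cube_adj h
  have hflipne : ∀ a : ZMod 2, a + 1 ≠ a := by decide
  -- the canonical partial paths of u and v are stepwise related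
  have hstp : ∀ k, stp n (pth n u k) (pth n v k) := by
    intro k
    by_cases hk : k ≤ (i : ℕ)
    · left
      funext j
      simp only [pth]
      by_cases h1 : (j : ℕ) < k
      · rw [if_pos h1, if_pos h1]
        exact hij j (fun hji => by subst hji; omega)
      · rw [if_neg h1, if_neg h1]
    · right
      rw [cube, torus, SimpleGraph.fromRel_adj]
      constructor
      · intro he
        have := congrFun he i
        simp only [pth, if_pos (by omega : (i : ℕ) < k)] at this
        rw [hi] at this
        exact hflipne _ this
      · left
        refine ⟨i, ?_, fun j hj => ?_⟩
        · simp only [pth, if_pos (by omega : (i : ℕ) < k)]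
          exact hi
        · simp only [pth]
          by_cases h1 : (j : ℕ) < k
          · rw [if_pos h1, if_pos h1]; exact hij j hj
          · rw [if_neg h1, if_neg h1]
  have key : ∀ k ∈ Finset.range n,
      dd N n g (pth n u (k+1)) (pth n u k) - dd N n g (pth n v (k+1)) (pth n v k)
      = dd N n g (pth n u (k+1)) (pth n v (k+1)) - dd N n g (pth n u k) (pth n v k) := by
    intro k hk
    rw [Finset.mem_range] at hk
    have := dd_square hN hg (pth_step n u hk) (hstp k) (hstp (k+1)) (pth_step n v hk)
    omega
  have : FF N n g u - FF N n g v
      = ∑ k ∈ Finset.range n,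
          (dd N n g (pth n u (k+1)) (pth n v (k+1)) - dd N n g (pth n u k) (pth n v k)) := by
    rw [FF, FF, ← Finset.sum_sub_distrib]
    exact Finset.sum_congr rfl key
  rw [this, Finset.sum_range_sub (fun k => dd N n g (pth n u k) (pth n v k)),
    pth_ge n u le_rfl, pth_ge n v le_rfl, pth_zero, pth_zero, dd_self, sub_zero]

end Hom

end LipAux

open LipAux in
/-- For `N ≥ 4·max 𝒮 + 1`, reduction mod `N` is a bijection from `Lip(Q_n; 𝒮)` onto
`Hom_𝟎(Q_n, C(N; 𝒮))`. -/
theorem lip_equiv_homZero (S : Finset ℕ) (N : ℕ) (hN : 4 * S.sup id + 1 ≤ N)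
    (n : ℕ) (hn : 1 ≤ n) :
    Set.BijOn
      (fun (f : (Fin n → ZMod 2) → ℤ) (v : Fin n → ZMod 2) => ((f v : ℤ) : ZMod N))
      {f | IsLip n S f} {g | IsHomZero n N S g} := by
  have hN0 : N ≠ 0 := by omega
  refine ⟨?_, ?_, ?_⟩
  · -- MapsTo
    intro f hf
    obtain ⟨hf0, hfe⟩ := hf
    refine ⟨by show ((f 0 : ℤ) : ZMod N) = 0; rw [hf0]; simp, fun u v h => ?_⟩
    refine ⟨(f u - f v).natAbs, hfe u v h, ?_⟩
    rcases Int.natAbs_eq (f u - f v) with he | he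
    · left
      have hc := congrArg (fun t : ℤ => ((t : ℤ) : ZMod N)) he
      simp only [Int.cast_natCast] at hc
      show ((f u : ℤ) : ZMod N) - ((f v : ℤ) : ZMod N) = _
      rw [← hc]; push_cast; ring
    · right
      have hc := congrArg (fun t : ℤ => ((t : ℤ) : ZMod N)) he
      simp only [Int.cast_natCast, Int.cast_neg] at hc
      show ((f v : ℤ) : ZMod N) - ((f u : ℤ) : ZMod N) = _
      have h2 : ((f v : ℤ) : ZMod N) - ((f u : ℤ) : ZMod N)
          = -(((f u - f v : ℤ)) : ZMod N) := by push_cast; ring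
      rw [h2, hc]; ring
  · -- InjOn
    intro f hf f' hf' heq
    have hpt : ∀ v, ((f v : ℤ) : ZMod N) = ((f' v : ℤ) : ZMod N) := fun v => congrFun heq v
    have hstep : ∀ u v, stp n u v → f u - f' u = f v - f' v := by
      intro u v h
      rcases h with rfl | h
      · rfl
      · have b1 : (f u - f v).natAbs ≤ S.sup id := Finset.le_sup (f := id) (hf.2 u v h)
        have b2 : (f' u - f' v).natAbs ≤ S.sup id := Finset.le_sup (f := id) (hf'.2 u v h)
        refine int_eq_of_cast_eq (N := N) ?_ ?_
        · push_cast
          rw [hpt u, hpt v]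
          ring
        · omega
    have hall : ∀ v, f v - f' v = 0 := by
      intro v
      have base : ∀ k, f (pth n v k) - f' (pth n v k) = 0 := by
        intro k
        induction k with
        | zero => rw [pth_zero, hf.1, hf'.1]; ring
        | succ k ih =>
          by_cases hk : k < n
          · rw [hstep _ _ (pth_step n v hk)]; exact ih
          · have e1 : pth n v (k+1) = v := pth_ge n v (by omega)
            have e2 : pth n v k = v := pth_ge n v (by omega)
            rw [e1]; rw [e2] at ih; exact ih
      have := base n
      rwa [pth_ge n v le_rfl] at this
    funext v
    have := hall v
    omega
  · -- SurjOn
    intro g hg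
    refine ⟨FF N n g, ⟨FF_zero, fun u v h => ?_⟩, ?_⟩
    · rw [FF_edge hN hg h]
      exact (dd_adj hN hg h).1
    · funext v
      exact FF_cast hN0 hg.1 v
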